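/- Let e be a splitting type of rank m+n, let a, a' be splitting types of rank n and equal degree, and b, b' splitting types of rank m and equal degree, with deg a + deg b = deg e. Suppose sort(b,a) ≤ e in the balancedness partial order, a > a', and b ≥ b'. Then hom(e,a') − end(a') − hom(b',a') < 0. -/

import Mathlib

open Finset

/-- Degree of a 1-based integer tuple of rank `n`. -/
def degT (a : ℕ → ℤ) (n : ℕ) : ℤ := ∑ i ∈ Icc 1 n, a i

/-- `a` is weakly increasing on indices `1, …, n` (a splitting type of rank `n`). -/
def Incr (a : ℕ → ℤ) (n : ℕ) : Prop := ∀ i j : ℕ, 1 ≤ i → i ≤ j → j ≤ n → a i ≤ a j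

/-- `S(μ,ν) = Σ_{i=ν}^n a_i + Σ_{i=μ}^m b_i − Σ_{i=μ+ν−1}^{m+n} e_i`. -/
def Sfun (b e a : ℕ → ℤ) (m n μ ν : ℕ) : ℤ :=
  (∑ i ∈ Icc ν n, a i) + (∑ i ∈ Icc μ m, b i) - ∑ i ∈ Icc (μ + ν - 1) (m + n), e i

/-- `A(μ,ν) = a_ν − e_{μ+ν}`. -/
def Afun (e a : ℕ → ℤ) (μ ν : ℕ) : ℤ := a ν - e (μ + ν)

/-- `B(μ,ν) = e_{μ+ν−1} − b_μ`. -/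
def Bfun (b e : ℕ → ℤ) (μ ν : ℕ) : ℤ := e (μ + ν - 1) - b μ

/-- `h_μ = min{ν : 1 ≤ ν ≤ n+1, S(μ,ν') < 0 for all ν' with ν < ν' ≤ n+1}`. -/
noncomputable def hfun (b e a : ℕ → ℤ) (m n μ : ℕ) : ℕ :=
  sInf {ν : ℕ | 1 ≤ ν ∧ ν ≤ n + 1 ∧ ∀ ν', ν < ν' → ν' ≤ n + 1 → Sfun b e a m n μ ν' < 0}

/-- Weak eligibility of a triple `(b,e,a)` of ranks `m, m+n, n`. -/
def WeaklyEligible (b e a : ℕ → ℤ) (m n : ℕ) : Prop :=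
  degT a n + degT b m = degT e (m + n) ∧
  (∀ i, 1 ≤ i → i ≤ n → e i ≤ a i) ∧
  (∀ i, 1 ≤ i → i ≤ m → b i ≤ e (n + i))

/-- The realizability criterion: weakly eligible, and `A(μ,ν) ≥ 0`, `B(μ,ν) ≥ 0`
whenever `1 ≤ μ ≤ m`, `1 ≤ ν ≤ n` and `ν ≥ h_μ`. -/
def RealizCrit (b e a : ℕ → ℤ) (m n : ℕ) : Prop :=
  WeaklyEligible b e a m n ∧
  ∀ μ ν, 1 ≤ μ → μ ≤ m → 1 ≤ ν → ν ≤ n → hfun b e a m n μ ≤ ν →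
    0 ≤ Afun e a μ ν ∧ 0 ≤ Bfun b e μ ν

/-- `f ≥ g` in the balancedness partial order (for tuples of rank `n`):
all prefix sums of `f` dominate those of `g`. -/
def MoreBal (f g : ℕ → ℤ) (n : ℕ) : Prop :=
  ∀ k, k ≤ n → (∑ i ∈ Icc 1 k, g i) ≤ ∑ i ∈ Icc 1 k, f i

/-- `f > g` in the balancedness partial order: `f ≥ g` and `f ≠ g` (on indices `1..n`). -/
def StrictMoreBal (f g : ℕ → ℤ) (n : ℕ) : Prop :=
  MoreBal f g n ∧ ∃ i, 1 ≤ i ∧ i ≤ n ∧ f i ≠ g i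

/-- `hom(u,v) = Σ_i Σ_j max(0, v_j − u_i + 1)`, the dimension of
`Hom(O(u), O(v))` on `P¹`. -/
def homT (u : ℕ → ℤ) (p : ℕ) (v : ℕ → ℤ) (q : ℕ) : ℤ :=
  ∑ i ∈ Icc 1 p, ∑ j ∈ Icc 1 q, max 0 (v j - u i + 1)

/-- Peel the top index off a prefix sum. -/
lemma sum_Icc_top (f : ℕ → ℤ) (p : ℕ) (hp : 1 ≤ p) :
    (∑ i ∈ Icc 1 p, f i) = (∑ i ∈ Icc 1 (p-1), f i) + f p := by
  obtain ⟨q, rfl⟩ : ∃ q, p = q + 1 := ⟨p - 1, by omega⟩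
  rw [Finset.sum_Icc_succ_top (by omega)]
  simp

/-- For a weakly increasing tuple, the sum of `max 0 (t - c i + 1)` over `1..n`
equals the honest sum over an initial segment where `c i ≤ t`. -/
lemma sum_max_eq (c : ℕ → ℤ) (n : ℕ) (hc : ∀ i j : ℕ, 1 ≤ i → i ≤ j → j ≤ n → c i ≤ c j)
    (t : ℤ) :
    ∃ r, r ≤ n ∧ (∀ i, 1 ≤ i → i ≤ r → c i ≤ t) ∧
      (∑ i ∈ Icc 1 n, max 0 (t - c i + 1)) = ∑ i ∈ Icc 1 r, (t - c i + 1) := by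
  set P : ℕ → Prop := fun k => 1 ≤ k ∧ c k ≤ t with hP
  have hfg := (Nat.findGreatest_eq_iff (P := P)).mp (rfl : Nat.findGreatest P n = _)
  set r := Nat.findGreatest P n with hr
  obtain ⟨hrn, hrP, hrgr⟩ := hfg
  have hle : ∀ i, 1 ≤ i → i ≤ r → c i ≤ t := by
    intro i h1 h2
    have hr0 : r ≠ 0 := by omega
    have := (hrP hr0).2
    exact le_trans (hc i r h1 h2 hrn) this
  have hgt : ∀ i, r < i → i ≤ n → t < c i := by
    intro i h1 h2
    have := hrgr h1 h2
    simp only [hP, not_and, not_le] at this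
    exact this (by omega)
  refine ⟨r, hrn, hle, ?_⟩
  have hsplit : (∑ i ∈ Icc 1 n, max 0 (t - c i + 1)) =
      (∑ i ∈ Icc 1 r, max 0 (t - c i + 1)) + ∑ i ∈ Icc (r+1) n, max 0 (t - c i + 1) := by
    rw [Finset.Icc_add_one_left_eq_Ioc, (by ext; simp only [mem_Icc, mem_Ioc]; omega : Icc 1 n = Ioc 0 n), (by ext; simp only [mem_Icc, mem_Ioc]; omega : Icc 1 r = Ioc 0 r),
      Finset.sum_Ioc_consecutive _ (Nat.zero_le r) hrn]
  rw [hsplit]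
  have h2 : (∑ i ∈ Icc (r+1) n, max 0 (t - c i + 1)) = 0 := by
    apply Finset.sum_eq_zero
    intro i hi
    rw [mem_Icc] at hi
    have := hgt i (by omega) hi.2
    have : t - c i + 1 ≤ 0 := by omega
    exact max_eq_left this
  have h1 : (∑ i ∈ Icc 1 r, max 0 (t - c i + 1)) = ∑ i ∈ Icc 1 r, (t - c i + 1) := by
    apply Finset.sum_congr rfl
    intro i hi
    rw [mem_Icc] at hi
    have := hle i hi.1 hi.2
    exact max_eq_right (by omega)
  rw [h1, h2, add_zero]

/-- Karamata-type inequality for the convex function `x ↦ max 0 (t - x + 1)`. -/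
lemma key_le (c c' : ℕ → ℤ) (n : ℕ)
    (hc : ∀ i j : ℕ, 1 ≤ i → i ≤ j → j ≤ n → c i ≤ c j)
    (hbal : ∀ k, k ≤ n → (∑ i ∈ Icc 1 k, c' i) ≤ ∑ i ∈ Icc 1 k, c i) (t : ℤ) :
    (∑ i ∈ Icc 1 n, max 0 (t - c i + 1)) ≤ ∑ i ∈ Icc 1 n, max 0 (t - c' i + 1) := by
  obtain ⟨r, hrn, _, hsum⟩ := sum_max_eq c n hc t
  rw [hsum]
  have e1 : (∑ i ∈ Icc 1 r, (t - c i + 1)) = (∑ i ∈ Icc 1 r, (t + 1)) - ∑ i ∈ Icc 1 r, c i := by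
    rw [← Finset.sum_sub_distrib]; apply Finset.sum_congr rfl; intros; ring
  have e2 : (∑ i ∈ Icc 1 r, (t - c' i + 1)) = (∑ i ∈ Icc 1 r, (t + 1)) - ∑ i ∈ Icc 1 r, c' i := by
    rw [← Finset.sum_sub_distrib]; apply Finset.sum_congr rfl; intros; ring
  have step1 : (∑ i ∈ Icc 1 r, (t - c i + 1)) ≤ ∑ i ∈ Icc 1 r, (t - c' i + 1) := by
    rw [e1, e2]; have := hbal r hrn; linarith
  have step2 : (∑ i ∈ Icc 1 r, (t - c' i + 1)) ≤ ∑ i ∈ Icc 1 r, max 0 (t - c' i + 1) :=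
    Finset.sum_le_sum (fun i _ => le_max_right _ _)
  have step3 : (∑ i ∈ Icc 1 r, max 0 (t - c' i + 1)) ≤ ∑ i ∈ Icc 1 n, max 0 (t - c' i + 1) :=
    Finset.sum_le_sum_of_subset_of_nonneg (Icc_subset_Icc_right hrn)
      (fun i _ _ => le_max_left _ _)
  linarith

/-- Strict version at the first index where the prefix sums differ. -/
lemma key_lt (c c' : ℕ → ℤ) (n p : ℕ)
    (hc : ∀ i j : ℕ, 1 ≤ i → i ≤ j → j ≤ n → c i ≤ c j)
    (hc' : ∀ i j : ℕ, 1 ≤ i → i ≤ j → j ≤ n → c' i ≤ c' j)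
    (hp1 : 1 ≤ p) (hpn : p ≤ n)
    (hstrict : (∑ i ∈ Icc 1 p, c' i) < ∑ i ∈ Icc 1 p, c i)
    (hmin : ∀ k, k < p → (∑ i ∈ Icc 1 k, c i) = ∑ i ∈ Icc 1 k, c' i) :
    (∑ i ∈ Icc 1 n, max 0 (c' p - c i + 1)) < ∑ i ∈ Icc 1 n, max 0 (c' p - c' i + 1) := by
  set t := c' p with ht
  -- c p > t
  have hps : p - 1 + 1 = p := by omega
  have hsc : (∑ i ∈ Icc 1 p, c i) = (∑ i ∈ Icc 1 (p-1), c i) + c p := sum_Icc_top c p hp1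
  have hsc' : (∑ i ∈ Icc 1 p, c' i) = (∑ i ∈ Icc 1 (p-1), c' i) + c' p := sum_Icc_top c' p hp1
  have hpre := hmin (p-1) (by omega)
  have hcp : t < c p := by rw [hsc, hsc'] at hstrict; omega
  obtain ⟨r, hrn, hler, hsum⟩ := sum_max_eq c n hc t
  have hrp : r < p := by
    by_contra h
    push_neg at h
    have := hler p hp1 h
    omega
  rw [hsum]
  -- rewrite LHS using prefix-sum equality at r
  have e1 : (∑ i ∈ Icc 1 r, (t - c i + 1)) = ∑ i ∈ Icc 1 r, (t - c' i + 1) := by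
    have ec : (∑ i ∈ Icc 1 r, (t - c i + 1)) = (∑ i ∈ Icc 1 r, (t + 1)) - ∑ i ∈ Icc 1 r, c i := by
      rw [← Finset.sum_sub_distrib]; apply Finset.sum_congr rfl; intros; ring
    have ec' : (∑ i ∈ Icc 1 r, (t - c' i + 1)) =
        (∑ i ∈ Icc 1 r, (t + 1)) - ∑ i ∈ Icc 1 r, c' i := by
      rw [← Finset.sum_sub_distrib]; apply Finset.sum_congr rfl; intros; ring
    rw [ec, ec', hmin r hrp]
  -- RHS bound from below by the sum over Icc 1 p
  have hval : ∀ i, 1 ≤ i → i ≤ p → (1:ℤ) ≤ t - c' i + 1 := by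
    intro i h1 h2
    have := hc' i p h1 h2 hpn
    omega
  have step2 : (∑ i ∈ Icc 1 p, (t - c' i + 1)) ≤ ∑ i ∈ Icc 1 n, max 0 (t - c' i + 1) := by
    calc (∑ i ∈ Icc 1 p, (t - c' i + 1)) ≤ ∑ i ∈ Icc 1 p, max 0 (t - c' i + 1) :=
          Finset.sum_le_sum (fun i _ => le_max_right _ _)
      _ ≤ ∑ i ∈ Icc 1 n, max 0 (t - c' i + 1) :=
          Finset.sum_le_sum_of_subset_of_nonneg (Icc_subset_Icc_right hpn)
            (fun i _ _ => le_max_left _ _)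
  -- split Icc 1 p into Icc 1 r and Ioc r p
  have hsplit : (∑ i ∈ Icc 1 p, (t - c' i + 1)) =
      (∑ i ∈ Icc 1 r, (t - c' i + 1)) + ∑ i ∈ Ioc r p, (t - c' i + 1) := by
    rw [(by ext; simp only [mem_Icc, mem_Ioc]; omega : Icc 1 p = Ioc 0 p), (by ext; simp only [mem_Icc, mem_Ioc]; omega : Icc 1 r = Ioc 0 r),
      Finset.sum_Ioc_consecutive _ (Nat.zero_le r) (le_of_lt hrp)]
  have hmid : (1:ℤ) ≤ ∑ i ∈ Ioc r p, (t - c' i + 1) := by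
    have hcard : (Ioc r p).card = p - r := Nat.card_Ioc r p
    have h1 : (∑ i ∈ Ioc r p, (1:ℤ)) ≤ ∑ i ∈ Ioc r p, (t - c' i + 1) := by
      apply Finset.sum_le_sum
      intro i hi
      rw [mem_Ioc] at hi
      exact hval i (by omega) hi.2
    rw [Finset.sum_const, hcard] at h1
    have h2 : (1:ℤ) ≤ (p - r : ℕ) • (1:ℤ) := by
      rw [nsmul_eq_mul, mul_one]
      exact_mod_cast Nat.one_le_iff_ne_zero.mpr (by omega)
    linarith
  linarith

/-- Splitting a sum over a sorted concatenation. -/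
lemma hom_split (s b a : ℕ → ℤ) (m n : ℕ)
    (hmul : Multiset.map s (Icc 1 (m + n)).val =
      Multiset.map b (Icc 1 m).val + Multiset.map a (Icc 1 n).val) (F : ℤ → ℤ) :
    (∑ i ∈ Icc 1 (m + n), F (s i)) =
      (∑ i ∈ Icc 1 m, F (b i)) + ∑ i ∈ Icc 1 n, F (a i) := by
  have h1 : (∑ i ∈ Icc 1 (m + n), F (s i)) =
      ((Multiset.map s (Icc 1 (m + n)).val).map F).sum := by
    rw [Multiset.map_map]
    rfl
  have h2 : (∑ i ∈ Icc 1 m, F (b i)) = ((Multiset.map b (Icc 1 m).val).map F).sum := by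
    rw [Multiset.map_map]; rfl
  have h3 : (∑ i ∈ Icc 1 n, F (a i)) = ((Multiset.map a (Icc 1 n).val).map F).sum := by
    rw [Multiset.map_map]; rfl
  rw [h1, h2, h3, hmul, Multiset.map_add, Multiset.sum_add]

theorem stmt8 (m n : ℕ) (hm : 1 ≤ m) (hn : 1 ≤ n)
    (e b b' a a' : ℕ → ℤ)
    (he : Incr e (m + n)) (hb : Incr b m) (hb' : Incr b' m)
    (ha : Incr a n) (ha' : Incr a' n)
    (hdega : degT a n = degT a' n) (hdegb : degT b m = degT b' m)
    (hdeg : degT a n + degT b m = degT e (m + n))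
    (hsort : ∃ s : ℕ → ℤ, Incr s (m + n) ∧
      Multiset.map s (Icc 1 (m + n)).val =
        Multiset.map b (Icc 1 m).val + Multiset.map a (Icc 1 n).val ∧
      MoreBal e s (m + n))
    (haa : StrictMoreBal a a' n) (hbb : MoreBal b b' m) :
    homT e (m + n) a' n - homT a' n a' n - homT b' m a' n < 0 := by
  obtain ⟨s, hs_incr, hs_mul, hs_bal⟩ := hsort
  obtain ⟨haa_bal, i0, hi01, hi0n, hi0ne⟩ := haa
  -- existence of a strict prefix index
  have hexQ : ∃ k, k ≤ n ∧ (∑ i ∈ Icc 1 k, a' i) < ∑ i ∈ Icc 1 k, a i := by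
    by_contra hcon
    push_neg at hcon
    have heqpre : ∀ k, k ≤ n → (∑ i ∈ Icc 1 k, a i) = ∑ i ∈ Icc 1 k, a' i :=
      fun k hk => le_antisymm (hcon k hk) (haa_bal k hk)
    apply hi0ne
    have h1 := heqpre i0 hi0n
    have h2 := heqpre (i0 - 1) (by omega)
    have hps : i0 - 1 + 1 = i0 := by omega
    have hsa : (∑ i ∈ Icc 1 i0, a i) = (∑ i ∈ Icc 1 (i0-1), a i) + a i0 := sum_Icc_top a i0 hi01
    have hsa' : (∑ i ∈ Icc 1 i0, a' i) = (∑ i ∈ Icc 1 (i0-1), a' i) + a' i0 := sum_Icc_top a' i0 hi01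
    rw [hsa, hsa', h2] at h1
    omega
  obtain ⟨k0, hk0n, hk0⟩ := hexQ
  have hexf : ∃ k, (∑ i ∈ Icc 1 k, a' i) < ∑ i ∈ Icc 1 k, a i := ⟨k0, hk0⟩
  set p := Nat.find hexf with hpdef
  have hQp : (∑ i ∈ Icc 1 p, a' i) < ∑ i ∈ Icc 1 p, a i := Nat.find_spec hexf
  have hpk0 : p ≤ k0 := Nat.find_min' hexf hk0
  have hpn : p ≤ n := le_trans hpk0 hk0n
  have hp1 : 1 ≤ p := by
    rcases Nat.eq_zero_or_pos p with h0 | h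
    · exfalso
      rw [h0, show Icc 1 0 = (∅ : Finset ℕ) from Icc_eq_empty (by omega)] at hQp
      simp at hQp
    · exact h
  have hmin : ∀ k, k < p → (∑ i ∈ Icc 1 k, a i) = ∑ i ∈ Icc 1 k, a' i := by
    intro k hk
    have hnot := Nat.find_min hexf hk
    push_neg at hnot
    exact le_antisymm hnot (haa_bal k (by omega))
  -- per-column inequalities
  have H1 : ∀ j, (∑ i ∈ Icc 1 (m+n), max 0 (a' j - e i + 1)) ≤
      ∑ i ∈ Icc 1 (m+n), max 0 (a' j - s i + 1) :=
    fun j => key_le e s (m+n) he hs_bal (a' j)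
  have H2 : ∀ j, (∑ i ∈ Icc 1 (m+n), max 0 (a' j - s i + 1)) =
      (∑ i ∈ Icc 1 m, max 0 (a' j - b i + 1)) + ∑ i ∈ Icc 1 n, max 0 (a' j - a i + 1) :=
    fun j => hom_split s b a m n hs_mul (fun x => max 0 (a' j - x + 1))
  have H3 : ∀ j, (∑ i ∈ Icc 1 m, max 0 (a' j - b i + 1)) ≤
      ∑ i ∈ Icc 1 m, max 0 (a' j - b' i + 1) :=
    fun j => key_le b b' m hb hbb (a' j)
  have H4 : (∑ j ∈ Icc 1 n, ∑ i ∈ Icc 1 n, max 0 (a' j - a i + 1)) <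
      ∑ j ∈ Icc 1 n, ∑ i ∈ Icc 1 n, max 0 (a' j - a' i + 1) := by
    apply Finset.sum_lt_sum
    · intro j _
      exact key_le a a' n ha haa_bal (a' j)
    · refine ⟨p, mem_Icc.mpr ⟨hp1, hpn⟩, ?_⟩
      exact key_lt a a' n p ha ha' hp1 hpn hQp hmin
  -- assemble
  have He : homT e (m+n) a' n = ∑ j ∈ Icc 1 n, ∑ i ∈ Icc 1 (m+n), max 0 (a' j - e i + 1) := by
    rw [homT, Finset.sum_comm]
  have Hb' : homT b' m a' n = ∑ j ∈ Icc 1 n, ∑ i ∈ Icc 1 m, max 0 (a' j - b' i + 1) := by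
    rw [homT, Finset.sum_comm]
  have Ha' : homT a' n a' n = ∑ j ∈ Icc 1 n, ∑ i ∈ Icc 1 n, max 0 (a' j - a' i + 1) := by
    rw [homT, Finset.sum_comm]
  have C1 : homT e (m+n) a' n ≤
      (∑ j ∈ Icc 1 n, ∑ i ∈ Icc 1 m, max 0 (a' j - b i + 1)) +
      ∑ j ∈ Icc 1 n, ∑ i ∈ Icc 1 n, max 0 (a' j - a i + 1) := by
    rw [He, ← Finset.sum_add_distrib]
    apply Finset.sum_le_sum
    intro j _
    calc (∑ i ∈ Icc 1 (m+n), max 0 (a' j - e i + 1))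
        ≤ ∑ i ∈ Icc 1 (m+n), max 0 (a' j - s i + 1) := H1 j
      _ = _ := H2 j
  have C2 : (∑ j ∈ Icc 1 n, ∑ i ∈ Icc 1 m, max 0 (a' j - b i + 1)) ≤
      ∑ j ∈ Icc 1 n, ∑ i ∈ Icc 1 m, max 0 (a' j - b' i + 1) :=
    Finset.sum_le_sum (fun j _ => H3 j)
  rw [Hb', Ha']
  linarith
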